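/- Let G be a finite connected cubic (3-regular) simple graph on n vertices with n ≥ 4 even. Then τ₂(G) ≤ 6n − 15, and equality τ₂(G) = 6n − 15 holds if and only if G has a spanning tree with no vertex of degree 2. -/

import Mathlib

open SimpleGraph Finset

set_option linter.unusedSectionVars false
set_option maxHeartbeats 1000000

variable {V : Type*}

/-- The `m`-metric (first Zagreb index) of a graph: the sum of the squares of the degrees. -/
noncomputable def mMetric [Fintype V] (G : SimpleGraph V) : ℕ :=
  letI := Classical.decRel G.Adj
  ∑ v : V, (G.degree v) ^ 2

/-- The `s`-metric (second Zagreb index) of a graph: the sum over all edges of the product of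
the degrees of the two endpoints. -/
noncomputable def sMetric [Fintype V] (G : SimpleGraph V) : ℕ :=
  letI := Classical.decRel G.Adj
  ∑ e ∈ G.edgeFinset,
    Sym2.lift ⟨fun u v => G.degree u * G.degree v, fun _ _ => Nat.mul_comm _ _⟩ e

/-- The first SF-dimension: the maximum of the `m`-metric over all spanning trees. -/
noncomputable def tau1 [Fintype V] (G : SimpleGraph V) : ℕ :=
  sSup {k | ∃ T : SimpleGraph V, T ≤ G ∧ T.IsTree ∧ mMetric T = k}

/-- The second SF-dimension: the maximum of the `s`-metric over all spanning trees. -/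
noncomputable def tau2 [Fintype V] (G : SimpleGraph V) : ℕ :=
  sSup {k | ∃ T : SimpleGraph V, T ≤ G ∧ T.IsTree ∧ sMetric T = k}

/-- Number of vertices of a given degree. -/
noncomputable def degCount [Fintype V] (G : SimpleGraph V) (k : ℕ) : ℕ :=
  letI := Classical.decRel G.Adj
  letI := Classical.decEq V
  (Finset.univ.filter fun v => G.degree v = k).card

/-- Number of leaves of a graph. -/
noncomputable def leafCount [Fintype V] (G : SimpleGraph V) : ℕ := degCount G 1

/-! ### Auxiliary material -/

/-- weight function for the degree of a neighbor of a degree-2 vertex -/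
def sfWfun (k : ℕ) : ℕ := if k = 2 then 2 else if k = 3 then 3 else 0

/-- indicator of `k = j` -/
def sfChi (j k : ℕ) : ℕ := if k = j then 1 else 0

lemma sf_reachable_of_closed {T : SimpleGraph V} {S : Set V}
    (hS : ∀ a ∈ S, ∀ b, T.Adj a b → b ∈ S) {a b : V} (p : T.Walk a b) (ha : a ∈ S) : b ∈ S := by
  induction p with
  | nil => exact ha
  | cons h q ih => exact ih (hS _ ha _ h)

lemma sf_reachable_delete_aux {T : SimpleGraph V} {v w : V}
    (h : (T \ fromEdgeSet {s(v, w)}).Reachable v w) {a b : V} (p : T.Walk a b) :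
    (T \ fromEdgeSet {s(v, w)}).Reachable a b := by
  induction p with
  | nil => exact Reachable.refl _
  | @cons a c b hadj q ih =>
    refine Reachable.trans ?_ ih
    by_cases he : s(a, c) = s(v, w)
    · rw [Sym2.eq_iff] at he
      rcases he with ⟨rfl, rfl⟩ | ⟨rfl, rfl⟩
      · exact h
      · exact h.symm
    · exact Adj.reachable (by simp [he, hadj, hadj.ne])

lemma sf_exists_spanning_tree [Fintype V] (G : SimpleGraph V) (hG : G.Connected) :
    ∃ T : SimpleGraph V, T ≤ G ∧ T.IsTree := by
  classical
  suffices h : ∀ (k : ℕ) (H : SimpleGraph V), H ≤ G → H.Connected →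
      H.edgeSet.ncard ≤ k → ∃ T : SimpleGraph V, T ≤ H ∧ T.IsTree by
    obtain ⟨T, hT, ht⟩ := h G.edgeSet.ncard G le_rfl hG le_rfl
    exact ⟨T, hT.trans le_rfl, ht⟩
  intro k
  induction k with
  | zero =>
    intro H hle hconn hcard
    refine ⟨H, le_rfl, hconn, ?_⟩
    have : H = ⊥ := by
      rw [← edgeSet_eq_empty]
      exact (Set.ncard_eq_zero H.edgeSet.toFinite).mp (Nat.le_zero.mp hcard)
    rw [this]; exact isAcyclic_bot
  | succ k ih =>
    intro H hle hconn hcard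
    by_cases hac : H.IsAcyclic
    · exact ⟨H, le_rfl, hconn, hac⟩
    · rw [isAcyclic_iff_forall_adj_isBridge] at hac
      push_neg at hac
      obtain ⟨v, w, hvw, hbr⟩ := hac
      have hreach : (H \ fromEdgeSet {s(v, w)}).Reachable v w := by
        by_contra hr; exact hbr hr
      set H' := H \ fromEdgeSet {s(v, w)} with hH'
      have hconn' : H'.Connected := by
        haveI := hconn.nonempty
        refine Connected.mk fun a b => ?_
        obtain ⟨p⟩ := hconn.preconnected a b
        exact sf_reachable_delete_aux hreach p
      have hedge : H'.edgeSet = H.edgeSet \ {s(v, w)} := by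
        rw [hH', edgeSet_sdiff, edgeSet_fromEdgeSet, edgeSet_sdiff_sdiff_isDiag]
      have hlt : H'.edgeSet.ncard < H.edgeSet.ncard := by
        rw [hedge]
        exact Set.ncard_diff_singleton_lt_of_mem hvw H.edgeSet.toFinite
      obtain ⟨T, hT, ht⟩ := ih H' ((sdiff_le).trans hle) hconn' (by omega)
      exact ⟨T, hT.trans sdiff_le, ht⟩

section Structural

variable [Fintype V] [DecidableEq V] {T : SimpleGraph V} [DecidableRel T.Adj]

lemma sf_degree_pos (hconn : T.Connected) (h2 : 2 ≤ Fintype.card V) (v : V) :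
    1 ≤ T.degree v := by
  rw [Nat.succ_le_iff, T.degree_pos_iff_exists_adj v]
  obtain ⟨w, hw⟩ := Fintype.exists_ne_of_one_lt_card (by omega) v
  obtain ⟨p⟩ := hconn.preconnected v w
  cases p with
  | nil => exact absurd rfl hw.symm
  | cons h q => exact ⟨_, h⟩

lemma sf_unique_nbr {u a b : V} (hd : T.degree u = 1) (ha : T.Adj u a) (hb : T.Adj u b) :
    a = b := by
  have h1 : (T.neighborFinset u).card ≤ 1 := le_of_eq hd
  exact Finset.card_le_one.mp h1 a (by simpa using ha) b (by simpa using hb)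

lemma sf_not_adj_leaves (hconn : T.Connected) (h3 : 3 ≤ Fintype.card V) {u v : V}
    (hadj : T.Adj u v) (hu : T.degree u = 1) (hv : T.degree v = 1) : False := by
  have hclosed : ∀ a ∈ ({u, v} : Set V), ∀ b, T.Adj a b → b ∈ ({u, v} : Set V) := by
    rintro a (rfl | rfl) b hb
    · exact Or.inr (sf_unique_nbr hu hb hadj)
    · exact Or.inl (sf_unique_nbr hv hb hadj.symm)
  have huniv : (univ : Finset V) ⊆ {u, v} := by
    intro x _
    obtain ⟨p⟩ := hconn.preconnected u x
    have := sf_reachable_of_closed hclosed p (Or.inl rfl)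
    simpa using this
  have := (Finset.card_le_card huniv).trans (Finset.card_insert_le _ _)
  simp only [Finset.card_singleton, Finset.card_univ] at this
  omega

lemma sf_c1_le_one (hconn : T.Connected) (h4 : 4 ≤ Fintype.card V) {v : V}
    (hv : T.degree v = 2) :
    ((T.neighborFinset v).filter fun u => T.degree u = 1).card ≤ 1 := by
  by_contra hc
  push_neg at hc
  have hsub : (T.neighborFinset v).filter (fun u => T.degree u = 1) ⊆ T.neighborFinset v :=
    Finset.filter_subset _ _
  have hcard : (T.neighborFinset v).card ≤
      ((T.neighborFinset v).filter fun u => T.degree u = 1).card := by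
    rw [card_neighborFinset_eq_degree, hv]; omega
  have heq := Finset.eq_of_subset_of_card_le hsub hcard
  have hall : ∀ u ∈ T.neighborFinset v, T.degree u = 1 := by
    intro u hu; rw [← heq] at hu; exact (Finset.mem_filter.mp hu).2
  have hclosed : ∀ a ∈ (insert v (T.neighborFinset v) : Finset V), ∀ b, T.Adj a b →
      b ∈ (insert v (T.neighborFinset v) : Finset V) := by
    intro a ha b hb
    rcases Finset.mem_insert.mp ha with rfl | ha
    · exact Finset.mem_insert_of_mem (by simpa using hb)
    · have hdeg1 := hall a ha
      have hav : T.Adj a v := ((T.mem_neighborFinset v a).mp ha).symm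
      have := sf_unique_nbr hdeg1 hb hav
      exact this ▸ Finset.mem_insert_self _ _
  have huniv : (univ : Finset V) ⊆ insert v (T.neighborFinset v) := by
    intro x _
    obtain ⟨p⟩ := hconn.preconnected v x
    exact sf_reachable_of_closed (S := fun y => y ∈ insert v (T.neighborFinset v)) hclosed p
      (Finset.mem_insert_self _ _)
  have h1 := (Finset.card_le_card huniv).trans (Finset.card_insert_le _ _)
  rw [Finset.card_univ, card_neighborFinset_eq_degree, hv] at h1
  omega

end Structural

section DartSums

variable [Fintype V] [DecidableEq V] (T : SimpleGraph V) [DecidableRel T.Adj]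

lemma sf_sum_dart_edge (f : Sym2 V → ℕ) :
    ∑ d : T.Dart, f d.edge = 2 * ∑ e ∈ T.edgeFinset, f e := by
  rw [← Finset.sum_fiberwise_of_maps_to
    (g := SimpleGraph.Dart.edge) (t := T.edgeFinset)
    (fun d _ => by rw [mem_edgeFinset]; exact d.edge_mem) (fun d => f d.edge)]
  rw [Finset.mul_sum]
  refine Finset.sum_congr rfl fun e he => ?_
  have : ∀ d ∈ univ.filter (fun d : T.Dart => d.edge = e), f d.edge = f e := by
    intro d hd; rw [(Finset.mem_filter.mp hd).2]
  rw [Finset.sum_congr rfl this, Finset.sum_const, smul_eq_mul]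
  congr 1
  exact T.dart_edge_fiber_card e (mem_edgeFinset.mp he)

lemma sf_sum_dart_fst (F : V → V → ℕ) :
    ∑ d : T.Dart, F d.fst d.snd = ∑ v, ∑ u ∈ T.neighborFinset v, F v u := by
  rw [← Finset.sum_fiberwise_of_maps_to
    (g := fun d : T.Dart => d.fst) (t := univ) (fun d _ => mem_univ _) (fun d => F d.fst d.snd)]
  refine Finset.sum_congr rfl fun v _ => ?_
  have hfib := T.dart_fst_fiber v
  rw [show (univ.filter fun d : T.Dart => d.fst = v) = univ.image (T.dartOfNeighborSet v) from hfib]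
  rw [Finset.sum_image (fun x _ y _ h => T.dartOfNeighborSet_injective v h)]
  have h1 : ∑ u : T.neighborSet v, F (T.dartOfNeighborSet v u).fst (T.dartOfNeighborSet v u).snd
      = ∑ u : T.neighborSet v, F v (↑u) := rfl
  rw [h1, Finset.sum_set_coe (f := fun u => F v u), neighborFinset_def]

lemma sf_sum_dart_swap (F : V → V → ℕ) :
    ∑ d : T.Dart, F d.fst d.snd = ∑ d : T.Dart, F d.snd d.fst :=
  Fintype.sum_equiv (SimpleGraph.Dart.symm_involutive (G := T)).toPerm _ _ (fun _ => rfl)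

end DartSums

lemma sf_key_arith (x y : ℕ) (hx1 : 1 ≤ x) (hx3 : x ≤ 3) (hy1 : 1 ≤ y) (hy3 : y ≤ 3)
    (hxy : ¬(x = 1 ∧ y = 1)) :
    2 * (x * y) + (sfChi 2 x * sfWfun y + sfChi 2 y * sfWfun x)
        + (3 * (3 - x) ^ 2 + 3 * (3 - y) ^ 2)
      = 18 + (sfChi 2 x * sfChi 1 y + sfChi 2 y * sfChi 1 x) := by
  interval_cases x <;> interval_cases y <;> simp_all [sfWfun, sfChi]

lemma sf_deg_cube (x : ℕ) (hx1 : 1 ≤ x) (hx3 : x ≤ 3) :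
    x * (3 * (3 - x) ^ 2) = 6 * (3 - x) := by
  interval_cases x <;> norm_num

section Master

variable [Fintype V] [DecidableEq V] (T : SimpleGraph V) [DecidableRel T.Adj]

lemma sf_master (hT : T.IsTree) (hdeg1 : ∀ v, 1 ≤ T.degree v) (hdeg3 : ∀ v, T.degree v ≤ 3)
    (h4 : 4 ≤ Fintype.card V) :
    2 * (∑ e ∈ T.edgeFinset,
        Sym2.lift ⟨fun a b => T.degree a * T.degree b, fun _ _ => Nat.mul_comm _ _⟩ e)
      + (∑ v, ∑ u ∈ T.neighborFinset v, sfChi 2 (T.degree v) * sfWfun (T.degree u)) + 30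
    = 12 * Fintype.card V
      + ∑ v, ∑ u ∈ T.neighborFinset v, sfChi 2 (T.degree v) * sfChi 1 (T.degree u) := by
  set n := Fintype.card V with hn
  set S := ∑ e ∈ T.edgeFinset,
      Sym2.lift ⟨fun a b => T.degree a * T.degree b, fun _ _ => Nat.mul_comm _ _⟩ e with hS
  set Q := ∑ v, ∑ u ∈ T.neighborFinset v, sfChi 2 (T.degree v) * sfWfun (T.degree u) with hQ
  set C := ∑ v, ∑ u ∈ T.neighborFinset v, sfChi 2 (T.degree v) * sfChi 1 (T.degree u) with hC
  have E1 : ∑ d : T.Dart,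
        (2 * (T.degree d.fst * T.degree d.snd)
          + (sfChi 2 (T.degree d.fst) * sfWfun (T.degree d.snd)
              + sfChi 2 (T.degree d.snd) * sfWfun (T.degree d.fst))
          + (3 * (3 - T.degree d.fst) ^ 2 + 3 * (3 - T.degree d.snd) ^ 2))
      = ∑ d : T.Dart,
        (18 + (sfChi 2 (T.degree d.fst) * sfChi 1 (T.degree d.snd)
              + sfChi 2 (T.degree d.snd) * sfChi 1 (T.degree d.fst))) := by
    refine Finset.sum_congr rfl fun d _ => ?_
    exact sf_key_arith _ _ (hdeg1 _) (hdeg3 _) (hdeg1 _) (hdeg3 _)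
      (fun ⟨h1, h2⟩ => sf_not_adj_leaves hT.isConnected (by omega) d.adj h1 h2)
  simp only [Finset.sum_add_distrib] at E1
  have hA : ∑ d : T.Dart, 2 * (T.degree d.fst * T.degree d.snd) = 4 * S := by
    rw [← Finset.mul_sum]
    have : ∑ d : T.Dart, T.degree d.fst * T.degree d.snd
        = ∑ d : T.Dart, (Sym2.lift
            ⟨fun a b => T.degree a * T.degree b, fun _ _ => Nat.mul_comm _ _⟩) d.edge := by
      refine Finset.sum_congr rfl fun d _ => ?_
      rfl
    rw [this, sf_sum_dart_edge, ← hS]; ring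
  have hB1 : ∑ d : T.Dart, sfChi 2 (T.degree d.fst) * sfWfun (T.degree d.snd) = Q :=
    sf_sum_dart_fst T (fun a b => sfChi 2 (T.degree a) * sfWfun (T.degree b))
  have hB2 : ∑ d : T.Dart, sfChi 2 (T.degree d.snd) * sfWfun (T.degree d.fst) = Q := by
    rw [sf_sum_dart_swap T (fun a b => sfChi 2 (T.degree b) * sfWfun (T.degree a))]
    exact hB1
  have hD1 : ∑ d : T.Dart, sfChi 2 (T.degree d.fst) * sfChi 1 (T.degree d.snd) = C :=
    sf_sum_dart_fst T (fun a b => sfChi 2 (T.degree a) * sfChi 1 (T.degree b))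
  have hD2 : ∑ d : T.Dart, sfChi 2 (T.degree d.snd) * sfChi 1 (T.degree d.fst) = C := by
    rw [sf_sum_dart_swap T (fun a b => sfChi 2 (T.degree b) * sfChi 1 (T.degree a))]
    exact hD1
  have hecard : T.edgeFinset.card + 1 = n := hT.card_edgeFinset
  have hdsum : ∑ v, T.degree v = 2 * T.edgeFinset.card :=
    T.sum_degrees_eq_twice_card_edges
  have hsum3 : ∑ v : V, (3 - T.degree v) + ∑ v, T.degree v = 3 * n := by
    rw [← Finset.sum_add_distrib]
    have : ∀ v : V, (3 - T.degree v) + T.degree v = 3 := fun v => by have := hdeg3 v; omega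
    rw [Finset.sum_congr rfl fun v _ => this v, Finset.sum_const, Finset.card_univ, smul_eq_mul,
      mul_comm]
  have hF1 : ∑ d : T.Dart, 3 * (3 - T.degree d.fst) ^ 2 = 6 * n + 12 := by
    rw [sf_sum_dart_fst T (fun a b => 3 * (3 - T.degree a) ^ 2)]
    have : ∀ v : V, ∑ u ∈ T.neighborFinset v, 3 * (3 - T.degree v) ^ 2
        = 6 * (3 - T.degree v) := by
      intro v
      rw [Finset.sum_const, card_neighborFinset_eq_degree, smul_eq_mul,
        sf_deg_cube _ (hdeg1 v) (hdeg3 v)]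
    rw [Finset.sum_congr rfl fun v _ => this v]
    rw [← Finset.mul_sum]
    omega
  have hF2 : ∑ d : T.Dart, 3 * (3 - T.degree d.snd) ^ 2 = 6 * n + 12 := by
    rw [sf_sum_dart_swap T (fun a b => 3 * (3 - T.degree b) ^ 2)]
    exact hF1
  have hconst : ∑ _d : T.Dart, (18 : ℕ) = 18 * (2 * T.edgeFinset.card) := by
    rw [Finset.sum_const, Finset.card_univ, smul_eq_mul, T.dart_card_eq_twice_card_edges]
    ring
  rw [hA, hB1, hB2, hF1, hF2, hconst, hD1, hD2] at E1
  omega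

lemma sf_vertex_ineq (hconn : T.Connected) (h4 : 4 ≤ Fintype.card V)
    (hdeg1 : ∀ v, 1 ≤ T.degree v) (hdeg3 : ∀ v, T.degree v ≤ 3) (v : V) :
    sfChi 2 (T.degree v) * (∑ u ∈ T.neighborFinset v, sfChi 1 (T.degree u))
        + sfChi 2 (T.degree v)
      ≤ sfChi 2 (T.degree v) * ∑ u ∈ T.neighborFinset v, sfWfun (T.degree u) := by
  by_cases hv : T.degree v = 2
  · rw [hv]
    simp only [show sfChi 2 2 = 1 from rfl, one_mul]
    have hc1 : ∑ u ∈ T.neighborFinset v, sfChi 1 (T.degree u) ≤ 1 := by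
      have := sf_c1_le_one hconn h4 hv
      rwa [Finset.card_filter] at this
    have hpart : ∑ u ∈ T.neighborFinset v,
        (sfChi 1 (T.degree u) + (sfChi 2 (T.degree u) + sfChi 3 (T.degree u))) = 2 := by
      have hone : ∀ u : V,
          sfChi 1 (T.degree u) + (sfChi 2 (T.degree u) + sfChi 3 (T.degree u)) = 1 := by
        intro u
        have h1 := hdeg1 u; have h3 := hdeg3 u
        simp only [sfChi]
        interval_cases (T.degree u) <;> norm_num
      rw [Finset.sum_congr rfl fun u _ => hone u, Finset.sum_const, smul_eq_mul, mul_one,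
        card_neighborFinset_eq_degree, hv]
    have hw : ∑ u ∈ T.neighborFinset v, sfWfun (T.degree u)
        = 2 * (∑ u ∈ T.neighborFinset v, sfChi 2 (T.degree u))
          + 3 * (∑ u ∈ T.neighborFinset v, sfChi 3 (T.degree u)) := by
      rw [Finset.mul_sum, Finset.mul_sum, ← Finset.sum_add_distrib]
      refine Finset.sum_congr rfl fun u _ => ?_
      have h1 := hdeg1 u; have h3 := hdeg3 u
      simp only [sfWfun, sfChi]
      interval_cases (T.degree u) <;> norm_num
    rw [Finset.sum_add_distrib, Finset.sum_add_distrib] at hpart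
    omega
  · simp [sfChi, if_neg hv]

end Master
section TreeKey

variable [Fintype V] [DecidableEq V] {G T : SimpleGraph V}
  [DecidableRel G.Adj] [DecidableRel T.Adj]

lemma sf_degree_le (hle : T ≤ G) (v : V) : T.degree v ≤ G.degree v :=
  Finset.card_le_card fun u hu => by
    rw [mem_neighborFinset] at hu ⊢; exact hle hu

lemma sf_tree_key (hcubic : ∀ v, G.degree v = 3) (hle : T ≤ G) (hT : T.IsTree)
    (h4 : 4 ≤ Fintype.card V) :
    2 * (∑ e ∈ T.edgeFinset,
        Sym2.lift ⟨fun a b => T.degree a * T.degree b, fun _ _ => Nat.mul_comm _ _⟩ e)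
        + (∑ v, sfChi 2 (T.degree v)) + 30 ≤ 12 * Fintype.card V ∧
      ((∀ v, T.degree v ≠ 2) →
        2 * (∑ e ∈ T.edgeFinset,
          Sym2.lift ⟨fun a b => T.degree a * T.degree b, fun _ _ => Nat.mul_comm _ _⟩ e)
          + 30 = 12 * Fintype.card V) := by
  have hdeg3 : ∀ v, T.degree v ≤ 3 := fun v => (sf_degree_le hle v).trans_eq (hcubic v)
  have hdeg1 : ∀ v, 1 ≤ T.degree v := fun v =>
    sf_degree_pos hT.isConnected (by omega) v
  have hmaster := sf_master T hT hdeg1 hdeg3 h4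
  set S := ∑ e ∈ T.edgeFinset,
      Sym2.lift ⟨fun a b => T.degree a * T.degree b, fun _ _ => Nat.mul_comm _ _⟩ e with hS
  have hQ' : ∑ v, ∑ u ∈ T.neighborFinset v, sfChi 2 (T.degree v) * sfWfun (T.degree u)
      = ∑ v, sfChi 2 (T.degree v) * ∑ u ∈ T.neighborFinset v, sfWfun (T.degree u) :=
    Finset.sum_congr rfl fun v _ => (Finset.mul_sum _ _ _).symm
  have hC' : ∑ v, ∑ u ∈ T.neighborFinset v, sfChi 2 (T.degree v) * sfChi 1 (T.degree u)
      = ∑ v, sfChi 2 (T.degree v) * ∑ u ∈ T.neighborFinset v, sfChi 1 (T.degree u) :=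
    Finset.sum_congr rfl fun v _ => (Finset.mul_sum _ _ _).symm
  rw [hQ', hC'] at hmaster
  have hup : (∑ v, sfChi 2 (T.degree v) * ∑ u ∈ T.neighborFinset v, sfChi 1 (T.degree u))
      + ∑ v, sfChi 2 (T.degree v)
      ≤ ∑ v, sfChi 2 (T.degree v) * ∑ u ∈ T.neighborFinset v, sfWfun (T.degree u) := by
    rw [← Finset.sum_add_distrib]
    exact Finset.sum_le_sum fun v _ => sf_vertex_ineq T hT.isConnected h4 hdeg1 hdeg3 v
  constructor
  · omega
  · intro hno
    have hQ0 : ∑ v, sfChi 2 (T.degree v) * ∑ u ∈ T.neighborFinset v, sfWfun (T.degree u) = 0 :=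
      Finset.sum_eq_zero fun v _ => by
        rw [show sfChi 2 (T.degree v) = 0 from if_neg (hno v), zero_mul]
    have hC0 : ∑ v, sfChi 2 (T.degree v) * ∑ u ∈ T.neighborFinset v, sfChi 1 (T.degree u) = 0 :=
      Finset.sum_eq_zero fun v _ => by
        rw [show sfChi 2 (T.degree v) = 0 from if_neg (hno v), zero_mul]
    omega

end TreeKey

lemma sf_sMetric_eq [Fintype V] (T : SimpleGraph V) [DecidableRel T.Adj] :
    sMetric T = ∑ e ∈ T.edgeFinset,
      Sym2.lift ⟨fun a b => T.degree a * T.degree b, fun _ _ => Nat.mul_comm _ _⟩ e := by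
  unfold sMetric
  congr!

lemma sf_degree_congr [Fintype V] (T : SimpleGraph V) (v : V)
    (i1 i2 : Fintype (T.neighborSet v)) :
    @SimpleGraph.degree _ T v i1 = @SimpleGraph.degree _ T v i2 := by congr!

lemma sf_final_key [Fintype V] (G T : SimpleGraph V) [DecidableRel G.Adj]
    (hcubic : ∀ v, G.degree v = 3) (hle : T ≤ G) (hT : T.IsTree) (h4 : 4 ≤ Fintype.card V) :
    2 * sMetric T + 30 ≤ 12 * Fintype.card V ∧
      ((∀ v : V, (letI := Classical.decRel T.Adj; T.degree v) ≠ 2) →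
        2 * sMetric T + 30 = 12 * Fintype.card V) ∧
      ((∃ v : V, (letI := Classical.decRel T.Adj; T.degree v) = 2) →
        2 * sMetric T + 31 ≤ 12 * Fintype.card V) := by
  classical
  have hkey := sf_tree_key hcubic hle hT h4
  rw [← sf_sMetric_eq] at hkey
  have hbridge : ∀ v : V, (letI := Classical.decRel T.Adj; T.degree v) = T.degree v :=
    fun v => sf_degree_congr T v _ _
  refine ⟨by omega, fun hno => ?_, fun ⟨v, hv⟩ => ?_⟩
  · exact hkey.2 fun v => by rw [← hbridge v]; exact hno v
  · have h1 : 1 ≤ ∑ w, sfChi 2 (T.degree w) := by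
      have hv' : T.degree v = 2 := by rw [← hbridge v]; exact hv
      calc (1 : ℕ) = sfChi 2 (T.degree v) := by rw [hv']; rfl
        _ ≤ ∑ w, sfChi 2 (T.degree w) :=
          Finset.single_le_sum (f := fun w => sfChi 2 (T.degree w)) (fun w _ => Nat.zero_le _)
            (Finset.mem_univ v)
    have := hkey.1
    omega

theorem tau2_le_of_cubic [Fintype V]
    (G : SimpleGraph V) [DecidableRel G.Adj] (hG : G.Connected)
    (hcubic : ∀ v : V, G.degree v = 3)
    (hn : 4 ≤ Fintype.card V) (heven : Even (Fintype.card V)) :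
    (tau2 G : ℤ) ≤ 6 * Fintype.card V - 15 ∧
      ((tau2 G : ℤ) = 6 * Fintype.card V - 15 ↔
        ∃ T : SimpleGraph V, T ≤ G ∧ T.IsTree ∧
          ∀ v : V, letI := Classical.decRel T.Adj; T.degree v ≠ 2) := by
  classical
  set n := Fintype.card V with hnn
  set Sset := {k | ∃ T : SimpleGraph V, T ≤ G ∧ T.IsTree ∧ sMetric T = k} with hSset
  have htau : tau2 G = sSup Sset := rfl
  have hS_ub : ∀ k ∈ Sset, k ≤ 6 * n - 15 := by
    rintro k ⟨T, hle, hT, rfl⟩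
    have := (sf_final_key G T hcubic hle hT hn).1
    omega
  have hne : Sset.Nonempty := by
    obtain ⟨T, hle, hT⟩ := sf_exists_spanning_tree G hG
    exact ⟨sMetric T, T, hle, hT, rfl⟩
  have hbdd : BddAbove Sset := ⟨6 * n - 15, fun k hk => hS_ub k hk⟩
  have hmem : tau2 G ∈ Sset := by rw [htau]; exact Nat.sSup_mem hne hbdd
  have htle : tau2 G ≤ 6 * n - 15 := hS_ub _ hmem
  refine ⟨by omega, ?_, ?_⟩
  · intro heq
    have heqn : tau2 G = 6 * n - 15 := by omega
    obtain ⟨T, hle, hT, hsm⟩ := hmem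
    refine ⟨T, hle, hT, fun v hv => ?_⟩
    have h3 := (sf_final_key G T hcubic hle hT hn).2.2 ⟨v, hv⟩
    omega
  · rintro ⟨T, hle, hT, hno⟩
    have h2 := (sf_final_key G T hcubic hle hT hn).2.1 hno
    have hmem' : sMetric T ∈ Sset := ⟨T, hle, hT, rfl⟩
    have hge : sMetric T ≤ tau2 G := htau ▸ le_csSup hbdd hmem'
    omega
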